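/- Let a and b be distinct points in the plane, let x be the reflection of a over the perpendicular bisector of b and c (where c is a third point not on line ab), and suppose a and b lie strictly on the same side of B(b,c). Then the segment (or line) through a and x is parallel to the line through b and c, and the angle ∠xbc is strictly smaller than the angle ∠abc. -/

import Mathlib

open EuclideanGeometry

instance (b c : EuclideanSpace ℝ (Fin 2)) :
    Nonempty (AffineSubspace.perpBisector b c) :=
  ⟨⟨midpoint ℝ b c, AffineSubspace.midpoint_mem_perpBisector b c⟩⟩

lemma reflection_perpBisector_left (b c : EuclideanSpace ℝ (Fin 2)) :
    EuclideanGeometry.reflection (AffineSubspace.perpBisector b c) b = c := by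
  have hm : (EuclideanGeometry.orthogonalProjection (AffineSubspace.perpBisector b c) b :
      EuclideanSpace ℝ (Fin 2)) = midpoint ℝ b c := by
    have h := EuclideanGeometry.inter_eq_singleton_orthogonalProjection
      (s := AffineSubspace.perpBisector b c) b
    have hmem : midpoint ℝ b c ∈
        (AffineSubspace.perpBisector b c : Set (EuclideanSpace ℝ (Fin 2))) ∩
        (AffineSubspace.mk' b (AffineSubspace.perpBisector b c).directionᗮ) := by
      constructor
      · exact AffineSubspace.midpoint_mem_perpBisector b c
      · rw [SetLike.mem_coe, AffineSubspace.mem_mk',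
          AffineSubspace.direction_perpBisector, Submodule.orthogonal_orthogonal,
          midpoint_vsub_left]
        exact Submodule.smul_mem _ _ (Submodule.mem_span_singleton_self _)
    rw [h] at hmem
    exact (Set.mem_singleton_iff.mp hmem).symm
  rw [EuclideanGeometry.reflection_apply', hm, midpoint_vsub_left, eq_comm,
    ← right_vsub_midpoint, vsub_vadd]

lemma reflection_perpBisector_right (b c : EuclideanSpace ℝ (Fin 2)) :
    EuclideanGeometry.reflection (AffineSubspace.perpBisector b c) c = b := by
  have h := EuclideanGeometry.reflection_reflection (AffineSubspace.perpBisector b c) b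
  rwa [reflection_perpBisector_left] at h

/-- If `x` is the reflection of `a` over the perpendicular bisector of `b` and `c` (with `c`
not on line `ab`), and `a` and `b` lie strictly on the same side of `B(b,c)`, then line `ax`
is parallel to line `bc` and `∠xbc < ∠abc`. -/
theorem reflection_angle_decreases (a b c x : EuclideanSpace ℝ (Fin 2))
    (hbc : b ≠ c) (hc : c ∉ affineSpan ℝ ({a, b} : Set (EuclideanSpace ℝ (Fin 2))))
    (hside : dist a b < dist a c)
    (hx : x = EuclideanGeometry.reflection (AffineSubspace.perpBisector b c) a) :
    (∃ t : ℝ, x - a = t • (c - b)) ∧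
      EuclideanGeometry.angle x b c < EuclideanGeometry.angle a b c := by
  -- Part 1: x - a is a multiple of c - b
  have hpart1 : ∃ t : ℝ, x - a = t • (c - b) := by
    have hspan : ∀ v : EuclideanSpace ℝ (Fin 2),
        v ∈ (AffineSubspace.perpBisector b c).directionᗮ →
        v ∈ (ℝ ∙ (c -ᵥ b) : Submodule ℝ (EuclideanSpace ℝ (Fin 2))) := by
      intro v hv
      rwa [AffineSubspace.direction_perpBisector, Submodule.orthogonal_orthogonal] at hv
    have horth := hspan _
      (EuclideanGeometry.orthogonalProjection_vsub_mem_direction_orthogonal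
        (AffineSubspace.perpBisector b c) a)
    have hxa : x -ᵥ a =
        ((EuclideanGeometry.orthogonalProjection (AffineSubspace.perpBisector b c) a :
          EuclideanSpace ℝ (Fin 2)) -ᵥ a) +
        ((EuclideanGeometry.orthogonalProjection (AffineSubspace.perpBisector b c) a :
          EuclideanSpace ℝ (Fin 2)) -ᵥ a) := by
      rw [hx, EuclideanGeometry.reflection_apply', vadd_vsub_assoc]
    have hmem : x -ᵥ a ∈ (ℝ ∙ (c -ᵥ b) : Submodule ℝ (EuclideanSpace ℝ (Fin 2))) := by
      rw [hxa]; exact Submodule.add_mem _ horth horth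
    rcases Submodule.mem_span_singleton.mp hmem with ⟨t, ht⟩
    exact ⟨t, by rw [← vsub_eq_sub, ← ht, vsub_eq_sub]⟩
  refine ⟨hpart1, ?_⟩
  -- Part 2: the angle inequality
  have hRb : EuclideanGeometry.reflection (AffineSubspace.perpBisector b c) b = c :=
    reflection_perpBisector_left b c
  have hRc : EuclideanGeometry.reflection (AffineSubspace.perpBisector b c) c = b :=
    reflection_perpBisector_right b c
  have hangle : EuclideanGeometry.angle x b c = EuclideanGeometry.angle a c b := by
    have h := (EuclideanGeometry.reflection
      (AffineSubspace.perpBisector b c)).toAffineIsometry.angle_map a c b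
    simp only [AffineIsometryEquiv.coe_toAffineIsometry] at h
    rw [hRc, hRb, ← hx] at h
    exact h
  rw [hangle]
  rcases eq_or_ne a b with hab | hab
  · subst hab
    have hac : a ≠ c := fun h => by simp [h] at hside
    rw [EuclideanGeometry.angle_self_of_ne hac, EuclideanGeometry.angle_self_left]
    linarith [Real.pi_pos]
  · have hp : 0 < dist a b := dist_pos.2 hab
    have hq : 0 < dist a c := hp.trans hside
    have hr : 0 < dist b c := dist_pos.2 hbc
    have htri : dist b c < dist a b + dist a c := by
      rcases (dist_triangle b a c).lt_or_eq with h | h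
      · rwa [dist_comm b a] at h
      · exfalso
        have hw : Wbtw ℝ b a c := dist_add_dist_eq_iff.mp h.symm
        have hcol : Collinear ℝ ({a, b, c} : Set (EuclideanSpace ℝ (Fin 2))) :=
          collinear_insert_of_mem_affineSpan_pair hw.mem_affineSpan
        exact hc (hcol.mem_affineSpan_of_mem_of_ne (by simp) (by simp) (by simp) hab)
    have h1 := EuclideanGeometry.law_cos a b c
    have h2 := EuclideanGeometry.law_cos a c b
    rw [dist_comm c b] at h1
    have hkey : 0 < (dist a c - dist a b) *
        ((dist a b + dist a c - dist b c) * (dist a b + dist a c + dist b c)) :=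
      mul_pos (sub_pos.2 hside) (mul_pos (by linarith) (by linarith))
    have hcos : Real.cos (∠ a b c) < Real.cos (∠ a c b) := by
      nlinarith [h1, h2, hkey, mul_pos (mul_pos hp hq) hr, mul_pos hp hr, mul_pos hq hr]
    exact (Real.strictAntiOn_cos.lt_iff_gt
      ⟨EuclideanGeometry.angle_nonneg a b c, EuclideanGeometry.angle_le_pi a b c⟩
      ⟨EuclideanGeometry.angle_nonneg a c b, EuclideanGeometry.angle_le_pi a c b⟩).mp hcos
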